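/- Let σ ∈ 𝒞_q with des(σ) = d and let k ≥ max{d, 2} be an integer. Then for every σ-admissible deployment vector w ∈ ℤ^{k−1} there is a unique realization 𝒪 of σ under m_k with dep(𝒪) = w. -/

import Mathlib

open scoped Classical

noncomputable section

/-- The representative of `i : ZMod q` in `{1, …, q}`. -/
def rep (q : ℕ) [NeZero q] (i : ZMod q) : ℕ :=
  if i = 0 then q else i.val

/-- The rotation `ρ : i ↦ i + 1 (mod q)` of `ZMod q`. -/
def rotPerm (q : ℕ) : Equiv.Perm (ZMod q) :=
  Equiv.addRight 1

/-- The descent number `des σ`: the number of `i ∈ ZMod q` with `σ(i) > σ(i+1)`,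
values compared via their representatives in `{1, …, q}`. -/
def desNum (q : ℕ) [NeZero q] (σ : Equiv.Perm (ZMod q)) : ℕ :=
  (Finset.univ.filter fun i : ZMod q => rep q (σ (i + 1)) < rep q (σ i)).card

/-- `σ` is a `q`-cycle, i.e. it acts transitively on `ZMod q`. -/
def IsQCycle (q : ℕ) (σ : Equiv.Perm (ZMod q)) : Prop :=
  ∀ i j : ZMod q, ∃ n : ℕ, (σ ^ n) i = j

/-- The transition matrix of `σ`: the `(i,j)` entry is `1` if `j` lies in the
cyclic interval `[σ(i), σ(i+1))` of `ZMod q` and `0` otherwise. -/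
def transMatrix (q : ℕ) [NeZero q] (σ : Equiv.Perm (ZMod q)) :
    Matrix (ZMod q) (ZMod q) ℝ :=
  Matrix.of fun i j => if (j - σ i).val < (σ (i + 1) - σ i).val then (1 : ℝ) else 0

/-- A probability vector: non-negative components summing to `1`. -/
def IsProbVec (q : ℕ) [NeZero q] (v : ZMod q → ℝ) : Prop :=
  (∀ i, 0 ≤ v i) ∧ ∑ i, v i = 1

/-- The symmetry order of `σ`: the order of the stabilizer of `σ` in the rotation
group `⟨ρ⟩` acting by conjugation. -/
def symOrder (q : ℕ) [NeZero q] (σ : Equiv.Perm (ZMod q)) : ℕ :=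
  ((Finset.range q).filter fun j => rotPerm q ^ j * σ * (rotPerm q ^ j)⁻¹ = σ).card

/-- `F : ℝ → ℝ` is a lift of a degree `k` covering map of `ℝ/ℤ`:
a homeomorphism of `ℝ` with `F (t+1) = F t + k`. -/
def IsDegreeLift (k : ℕ) (F : ℝ → ℝ) : Prop :=
  Continuous F ∧ StrictMono F ∧ ∀ t, F (t + 1) = F t + k

/-- The fixed point of the circle map corresponding to `u` (a point with
`F u - u ∈ ℤ`) is topologically repelling: `t ↦ F t - t` is strictly increasing
in a neighborhood of `u`. -/
def TopRepelling (F : ℝ → ℝ) (u : ℝ) : Prop :=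
  ∃ ε > 0, StrictMonoOn (fun t => F t - t) (Set.Ioo (u - ε) (u + ε))

/-- `x : ZMod q → ℝ` is a period `q` orbit realizing `σ` for the circle map with
lift `F`: the points `x i` lie in `(0,1)` and are increasing with respect to the
representatives `{1, …, q}` (so that `0, x₁, …, x_q` are in positive cyclic
order), and on the circle `f(x i) = x (σ i)` for all `i`. -/
def IsRealization (q : ℕ) [NeZero q] (σ : Equiv.Perm (ZMod q))
    (F : ℝ → ℝ) (x : ZMod q → ℝ) : Prop :=
  (∀ i, x i ∈ Set.Ioo (0 : ℝ) 1) ∧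
  (∀ i j : ZMod q, rep q i < rep q j → x i < x j) ∧
  (∀ i, ∃ m : ℤ, F (x i) = x (σ i) + m)

/-- A realization of `σ` under the multiplication map `m_k : x ↦ kx (mod ℤ)`. -/
def MkRealization (q k : ℕ) [NeZero q] (σ : Equiv.Perm (ZMod q)) (x : ZMod q → ℝ) : Prop :=
  IsRealization q σ (fun t => (k : ℝ) * t) x

/-- The upper endpoint (as a real number) of the partition interval
`I i = [x i, x (i+1)]`; for `i = 0 ≡ q` the interval wraps around `0 ∈ ℝ/ℤ`
and the endpoint is `x 1 + 1`. -/
def upperPt (q : ℕ) [NeZero q] (x : ZMod q → ℝ) (i : ZMod q) : ℝ :=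
  if i = 0 then x 1 + 1 else x (i + 1)

/-- The `i`-th component of the fixed point distribution: the number of fixed
points of `m_k` (the points `j/(k-1) (mod ℤ)`) in the interior of the partition
interval `I i`. -/
def fixDist (q k : ℕ) [NeZero q] (x : ZMod q → ℝ) (i : ZMod q) : ℕ :=
  ((Finset.Icc 1 (2 * (k - 1))).filter fun j : ℕ =>
    x i < (j : ℝ) / ((k : ℝ) - 1) ∧ (j : ℝ) / ((k : ℝ) - 1) < upperPt q x i).card

/-- The number of fixed points of `m_k` in the interval `(0, x 1)`. -/
def countFixBelow (q k : ℕ) [NeZero q] (x : ZMod q → ℝ) : ℕ :=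
  ((Finset.range (k - 1)).filter fun j : ℕ =>
    0 < j ∧ (j : ℝ) / ((k : ℝ) - 1) < x 1).card

/-- The `m`-th component of the (cumulative) deployment vector: the number of
orbit points in `(0, m/(k-1))`. -/
def depCount (q k : ℕ) [NeZero q] (x : ZMod q → ℝ) (m : ℕ) : ℕ :=
  (Finset.univ.filter fun j : ZMod q => x j < (m : ℝ) / ((k : ℝ) - 1)).card

/-- The rank of a marked index `i` among the marked indices `i₁ < ⋯ < i_{d-1}`
(ordered by their representatives in `{1, …, q}`). -/
def markRank (q : ℕ) [NeZero q] (σ : Equiv.Perm (ZMod q)) (i : ZMod q) : ℕ :=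
  (Finset.univ.filter fun i' : ZMod q =>
    transMatrix q σ i' i' = 1 ∧ rep q i' ≤ rep q i).card


namespace RealAux
variable {q : ℕ} [NeZero q] {σ : Equiv.Perm (ZMod q)}

lemma rep_pos (i : ZMod q) : 1 ≤ rep q i := by
  unfold rep
  split
  · exact Nat.one_le_iff_ne_zero.2 (NeZero.ne q)
  · rename_i h
    have : i.val ≠ 0 := fun h0 => h (by rwa [ZMod.val_eq_zero] at h0)
    omega

lemma rep_le (i : ZMod q) : rep q i ≤ q := by
  unfold rep
  split
  · exact le_refl q
  · exact le_of_lt (ZMod.val_lt i)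

lemma rep_inj : Function.Injective (rep q) := by
  intro i j h
  unfold rep at h
  split at h <;> split at h
  · rename_i hi hj; rw [hi, hj]
  · rename_i hi hj
    have := ZMod.val_lt j; omega
  · rename_i hi hj
    have := ZMod.val_lt i; omega
  · exact ZMod.val_injective q h

lemma rep_cast {m : ℕ} (h1 : 1 ≤ m) (h2 : m ≤ q) : rep q ((m : ZMod q)) = m := by
  unfold rep
  rcases eq_or_lt_of_le h2 with h | h
  · subst h
    rw [if_pos (by simp [ZMod.natCast_self])]
  · rw [if_neg, ZMod.val_cast_of_lt h]
    intro h0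
    have := ZMod.val_cast_of_lt h
    rw [h0, ZMod.val_zero] at this
    omega

lemma cast_rep (i : ZMod q) : ((rep q i : ℕ) : ZMod q) = i := by
  unfold rep
  split
  · rename_i h; rw [h, ZMod.natCast_self]
  · exact ZMod.natCast_rightInverse i

lemma rep_ne_of_ne {i j : ZMod q} (h : i ≠ j) : rep q i ≠ rep q j :=
  fun he => h (rep_inj he)

lemma sub_val_lt {i j : ZMod q} (h : rep q j < rep q i) :
    (i - j).val = rep q i - rep q j := by
  have hi := cast_rep i
  have hj := cast_rep j
  have hij : i - j = (((rep q i - rep q j : ℕ)) : ZMod q) := by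
    rw [Nat.cast_sub (le_of_lt h), hi, hj]
  rw [hij, ZMod.val_cast_of_lt]
  have := rep_le i
  have := rep_pos j
  omega

lemma sub_val_gt {i j : ZMod q} (h : rep q i < rep q j) :
    (i - j).val = q + rep q i - rep q j := by
  have hi := cast_rep i
  have hj := cast_rep j
  have hij : i - j = (((q + rep q i - rep q j : ℕ)) : ZMod q) := by
    have hle : rep q j ≤ q + rep q i := le_trans (rep_le j) (by omega)
    rw [Nat.cast_sub hle, Nat.cast_add, ZMod.natCast_self, zero_add, hi, hj]
  rw [hij, ZMod.val_cast_of_lt]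
  have := rep_le j
  have := rep_pos j
  omega



lemma card_rep_le {r : ℕ} (hr : r ≤ q) :
    (Finset.univ.filter fun p : ZMod q => rep q p ≤ r).card = r := by
  have : (Finset.univ.filter fun p : ZMod q => rep q p ≤ r).card = (Finset.Icc 1 r).card := by
    apply Finset.card_bij (fun p _ => rep q p)
    · intro a ha
      simp only [Finset.mem_filter] at ha
      exact Finset.mem_Icc.2 ⟨rep_pos a, ha.2⟩
    · intro a _ b _ h; exact rep_inj h
    · intro m hm
      rw [Finset.mem_Icc] at hm
      refine ⟨(m : ZMod q), ?_, rep_cast hm.1 (le_trans hm.2 hr)⟩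
      simp only [Finset.mem_filter, Finset.mem_univ, true_and]
      rw [rep_cast hm.1 (le_trans hm.2 hr)]; exact hm.2
  rw [this, Nat.card_Icc]; omega

lemma period_ge (hσ : IsQCycle q σ) {x : ZMod q} {m : ℕ} (hm : 0 < m)
    (hx : (σ ^ m) x = x) : q ≤ m := by
  have hA : ∀ t : ℕ, ((σ ^ m) ^ t) x = x := by
    intro t
    induction t with
    | zero => rfl
    | succ t ih => rw [pow_succ, Equiv.Perm.mul_apply, hx, ih]
  have hB : ∀ n : ℕ, (σ ^ n) x = (σ ^ (n % m)) x := by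
    intro n
    conv_lhs => rw [← Nat.mod_add_div n m]
    rw [pow_add, Equiv.Perm.mul_apply, pow_mul, hA]
  have hsub : (Finset.univ : Finset (ZMod q)) ⊆
      (Finset.range m).image (fun n => (σ ^ n) x) := by
    intro j _
    obtain ⟨n, hn⟩ := hσ x j
    rw [Finset.mem_image]
    exact ⟨n % m, Finset.mem_range.2 (Nat.mod_lt n hm), by rw [← hB]; exact hn⟩
  have h1 : (Finset.univ : Finset (ZMod q)).card = q := by
    simp [ZMod.card]
  have := le_trans (Finset.card_le_card hsub) (Finset.card_image_le)
  rw [h1, Finset.card_range] at this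
  exact this

lemma nofix (hσ : IsQCycle q σ) (hq : 2 ≤ q) (i : ZMod q) : σ i ≠ i := by
  intro h
  have : q ≤ 1 := period_ge hσ (by norm_num) (x := i) (m := 1) (by simpa using h)
  omega

lemma orbit_lt (hσ : IsQCycle q σ) (i j : ZMod q) : ∃ n, n < q ∧ (σ ^ n) i = j := by
  have hinj : Function.Injective (fun n : Fin q => (σ ^ (n : ℕ)) i) := by
    intro a b hab
    by_contra hne
    wlog hlt : (a : ℕ) < (b : ℕ) generalizing a b
    · have hba : (b : ℕ) < (a : ℕ) := by
        have := Fin.val_ne_of_ne hne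
        omega
      exact this hab.symm (Ne.symm hne) hba
    · have : (σ ^ ((b : ℕ) - (a : ℕ))) ((σ ^ (a : ℕ)) i) = (σ ^ (a:ℕ)) i := by
        rw [← Equiv.Perm.mul_apply, ← pow_add]
        rw [Nat.sub_add_cancel (le_of_lt hlt)]
        exact hab.symm
      have := period_ge hσ (by omega) this
      omega
  have hsurj := (Fintype.bijective_iff_injective_and_card _).2
    ⟨hinj, by simp [ZMod.card]⟩ |>.2
  obtain ⟨n, hn⟩ := hsurj j
  exact ⟨n, n.isLt, hn⟩

lemma pow_q (hσ : IsQCycle q σ) (i : ZMod q) : (σ ^ q) i = i := by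
  obtain ⟨n, hnq, hn⟩ := orbit_lt hσ i ((σ ^ q) i)
  rcases Nat.eq_zero_or_pos n with h0 | h0
  · rw [h0] at hn; exact hn.symm
  · have : (σ ^ (q - n)) ((σ ^ n) i) = (σ ^ n) i := by
      rw [← Equiv.Perm.mul_apply, ← pow_add, Nat.sub_add_cancel (le_of_lt hnq), hn]
    have := period_ge hσ (by omega) this
    omega

lemma tstep (hq : 2 ≤ q) (p : ZMod q)
    (hunm : ¬ ((p - σ p).val < (σ (p + 1) - σ p).val)) :
    ((p + 1) - σ (p + 1)).val ≤ (p - σ p).val := by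
  push_neg at hunm
  set a := (p - σ p).val with ha
  set b := (σ (p + 1) - σ p).val with hb
  have hb1 : 1 ≤ b := by
    rw [hb, Nat.one_le_iff_ne_zero]
    intro h0
    rw [ZMod.val_eq_zero, sub_eq_zero] at h0
    have : p + 1 = p := σ.injective h0
    have : (1 : ZMod q) = 0 := by
      have := congrArg (· - p) this
      simpa [add_sub_cancel_left] using this
    have hc : ((1:ℕ) : ZMod q) = ((0:ℕ) : ZMod q) := by exact_mod_cast this
    have := (ZMod.natCast_eq_natCast_iff' 1 0 q).1 hc
    simp [Nat.mod_eq_of_lt (by omega : 1 < q)] at this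
  have haq : a < q := ZMod.val_lt _
  have key : (p + 1) - σ (p + 1) = ((a - b + 1 : ℕ) : ZMod q) := by
    have h1 : (p + 1) - σ (p + 1) = (p - σ p) - (σ (p + 1) - σ p) + 1 := by ring
    have h2 : p - σ p = ((a : ℕ) : ZMod q) := (ZMod.natCast_rightInverse _).symm
    have h3 : σ (p + 1) - σ p = ((b : ℕ) : ZMod q) := (ZMod.natCast_rightInverse _).symm
    rw [h1, h2, h3, ← Nat.cast_sub hunm, ← Nat.cast_one, ← Nat.cast_add]
  rw [key, ZMod.val_cast_of_lt (by omega)]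
  omega

lemma tchain (hq : 2 ≤ q) {r r' : ℕ} (h1 : 1 ≤ r) (hrr' : r ≤ r') (hr'q : r' ≤ q)
    (hnomark : ∀ p : ZMod q, (p - σ p).val < (σ (p + 1) - σ p).val →
      ¬(r ≤ rep q p ∧ rep q p < r')) :
    (((r' : ZMod q)) - σ ((r' : ZMod q))).val ≤ (((r : ZMod q)) - σ ((r : ZMod q))).val := by
  induction r' , hrr' using Nat.le_induction with
  | base => exact le_refl _
  | succ m hm ih =>
    have hmq : m < q := by omega
    have step : (((m : ZMod q) + 1) - σ ((m : ZMod q) + 1)).val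
        ≤ (((m : ZMod q)) - σ ((m : ZMod q))).val := by
      apply tstep hq
      intro hmark
      exact hnomark _ hmark ⟨by rw [rep_cast (by omega) (by omega)]; omega,
        by rw [rep_cast (by omega) (by omega)]; omega⟩
    have hc : ((m + 1 : ℕ) : ZMod q) = (m : ZMod q) + 1 := by push_cast; ring
    rw [hc]
    exact le_trans step (ih (by omega) (fun p hp ⟨h1', h2'⟩ => hnomark p hp ⟨h1', by omega⟩))

/-- Key combinatorial lemma: a marked index exists between `rep i` and `rep i'`. -/
lemma key_marked (hσ : IsQCycle q σ) (hq : 2 ≤ q) (i i' : ZMod q)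
    (hrr : rep q i < rep q i')
    (hD : (rep q (σ i') < rep q (σ i) ∧ ((rep q (σ i) < rep q i) ↔ (rep q (σ i') < rep q i')))
        ∨ (rep q (σ i) < rep q i ∧ rep q i' ≤ rep q (σ i'))) :
    ∃ p : ZMod q, ((p - σ p).val < (σ (p + 1) - σ p).val) ∧
      rep q i ≤ rep q p ∧ rep q p < rep q i' := by
  by_contra hno
  push_neg at hno
  have hrpos := rep_pos i
  have hr'q := rep_le i'
  have hchain : (i' - σ i').val ≤ (i - σ i).val := by
    have := tchain (σ := σ) hq (rep_pos i) (le_of_lt hrr) hr'q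
      (fun p hp hc => by
        have := hno p hp hc.1
        omega)
    rwa [cast_rep, cast_rep] at this
  set r := rep q i with hr
  set r' := rep q i' with hr'
  -- now case analysis
  have hfixi : σ i ≠ i := nofix hσ hq i
  have hfixi' : σ i' ≠ i' := nofix hσ hq i'
  have hsne : rep q (σ i) ≠ r := rep_ne_of_ne hfixi
  have hs'ne : rep q (σ i') ≠ r' := rep_ne_of_ne hfixi'
  have hs1 := rep_pos (σ i)
  have hs'1 := rep_pos (σ i')
  have hsq := rep_le (σ i)
  have hs'q := rep_le (σ i')
  rcases hD with ⟨hcross, hiff⟩ | ⟨hs, hs'⟩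
  · rcases lt_or_gt_of_ne hsne with hsr | hsr
    · have hs'r' : rep q (σ i') < r' := hiff.1 hsr
      rw [sub_val_lt hsr, sub_val_lt hs'r'] at hchain
      omega
    · have hs'r' : ¬ (rep q (σ i') < r') := fun h => by
        have := hiff.2 h; omega
      push_neg at hs'r'
      have hs'r'' : r' < rep q (σ i') := by omega
      rw [sub_val_gt hsr, sub_val_gt hs'r''] at hchain
      omega
  · have hs'gt : r' < rep q (σ i') := by omega
    rw [sub_val_lt hs, sub_val_gt hs'gt] at hchain
    omega

/-- number of fixed points forced below level `t`. -/
def cVal (k : ℕ) (w : ℕ → ℕ) (t : ℕ) : ℕ :=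
  ((Finset.Icc 1 (k - 2)).filter fun j => w j < t).card

/-- the digit of the orbit point with index `i`. -/
def dig (q k : ℕ) [NeZero q] (σ : Equiv.Perm (ZMod q)) (w : ℕ → ℕ) (i : ZMod q) : ℕ :=
  cVal k w (rep q i) + if rep q (σ i) < rep q i then 1 else 0

lemma cVal_mono (k : ℕ) (w : ℕ → ℕ) {t t' : ℕ} (h : t ≤ t') :
    cVal k w t ≤ cVal k w t' := by
  apply Finset.card_le_card
  intro j hj
  simp only [Finset.mem_filter] at hj ⊢
  exact ⟨hj.1, by omega⟩

lemma cVal_le (k : ℕ) (w : ℕ → ℕ) (t : ℕ) : cVal k w t ≤ k - 2 := by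
  have := Finset.card_filter_le (Finset.Icc 1 (k - 2)) (fun j => w j < t)
  simpa [cVal, Nat.card_Icc] using this

lemma wmono' {k : ℕ} {w : ℕ → ℕ} (hmono : ∀ m : ℕ, 1 ≤ m → m < k - 1 → w m ≤ w (m + 1)) :
    ∀ a b : ℕ, 1 ≤ a → a ≤ b → b ≤ k - 1 → w a ≤ w b := by
  intro a b ha hab hbk
  induction b, hab using Nat.le_induction with
  | base => exact le_refl _
  | succ m hm ih => exact le_trans (ih (by omega)) (hmono m (by omega) (by omega))

section main
variable {k : ℕ} {w : ℕ → ℕ}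
variable (hσ : IsQCycle q σ) (hq : 2 ≤ q) (hk2 : 2 ≤ k)
  (hmono : ∀ m : ℕ, 1 ≤ m → m < k - 1 → w m ≤ w (m + 1))
  (hlast : w (k - 1) = q)
  (hmark : ∀ i : ZMod q, transMatrix q σ i i = 1 →
      ∃ m : ℕ, 1 ≤ m ∧ m ≤ k - 1 ∧ w m = rep q i)

include hσ hq hk2 hmono hlast hmark in
lemma cgrow (i i' : ZMod q) (hrr : rep q i < rep q i')
    (hD : (rep q (σ i') < rep q (σ i) ∧ ((rep q (σ i) < rep q i) ↔ (rep q (σ i') < rep q i')))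
        ∨ (rep q (σ i) < rep q i ∧ rep q i' ≤ rep q (σ i'))) :
    cVal k w (rep q i) < cVal k w (rep q i') := by
  have hk2' : 2 ≤ k := hk2
  obtain ⟨p, hp, hp1, hp2⟩ := key_marked hσ hq i i' hrr hD
  obtain ⟨m, hm1, hm2, hm3⟩ := hmark p (by
    unfold transMatrix
    simp only [Matrix.of_apply]
    rw [if_pos hp])
  have hmq : m ≠ k - 1 := by
    intro h
    rw [h, hlast] at hm3
    have := rep_le i'
    omega
  apply Finset.card_lt_card
  constructor
  · intro j hj
    simp only [Finset.mem_filter] at hj ⊢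
    exact ⟨hj.1, by omega⟩
  · intro hsub
    have hmem : m ∈ (Finset.Icc 1 (k - 2)).filter fun j => w j < rep q i' := by
      simp only [Finset.mem_filter, Finset.mem_Icc]
      exact ⟨⟨hm1, by omega⟩, by omega⟩
    have := hsub hmem
    simp only [Finset.mem_filter, Finset.mem_Icc] at this
    omega

include hσ hq hk2 hmono hlast hmark in
lemma digitC (i i' : ZMod q) (hrr : rep q i < rep q i') :
    dig q k σ w i < dig q k σ w i' ∨
      (dig q k σ w i = dig q k σ w i' ∧ rep q (σ i) < rep q (σ i')) := by
  have hne : i ≠ i' := fun h => by rw [h] at hrr; omega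
  have hsne : σ i ≠ σ i' := fun h => hne (σ.injective h)
  have hsrne : rep q (σ i) ≠ rep q (σ i') := rep_ne_of_ne hsne
  have hfi : rep q (σ i) ≠ rep q i := rep_ne_of_ne (nofix hσ hq i)
  have hfi' : rep q (σ i') ≠ rep q i' := rep_ne_of_ne (nofix hσ hq i')
  have hcm : cVal k w (rep q i) ≤ cVal k w (rep q i') := cVal_mono k w (le_of_lt hrr)
  unfold dig
  rcases lt_or_gt_of_ne hsrne with hlt | hgt
  · -- s < s' : show dig i ≤ dig i', conclude
    have hle : dig q k σ w i ≤ dig q k σ w i' := by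
      unfold dig
      by_cases h1 : rep q (σ i) < rep q i
      · by_cases h2 : rep q (σ i') < rep q i'
        · simp only [if_pos h1, if_pos h2]; omega
        · -- nesting case
          have hcg := cgrow hσ hq hk2 hmono hlast hmark i i' hrr
            (Or.inr ⟨h1, by omega⟩)
          simp only [if_pos h1, if_neg h2]; omega
      · by_cases h2 : rep q (σ i') < rep q i'
        · simp only [if_neg h1, if_pos h2]; omega
        · simp only [if_neg h1, if_neg h2]; omega
    rcases lt_or_eq_of_le hle with h | h
    · exact Or.inl (by unfold dig at h; exact h)
    · exact Or.inr ⟨by unfold dig at h; exact h, hlt⟩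
  · -- s' < s : show dig i < dig i'
    left
    by_cases h1 : rep q (σ i) < rep q i
    · by_cases h2 : rep q (σ i') < rep q i'
      · have hcg := cgrow hσ hq hk2 hmono hlast hmark i i' hrr
          (Or.inl ⟨hgt, by omega⟩)
        simp only [if_pos h1, if_pos h2]; omega
      · -- impossible: s' < s < r ≤ r' ≤ s'
        omega
    · by_cases h2 : rep q (σ i') < rep q i'
      · simp only [if_neg h1, if_pos h2]; omega
      · have hcg := cgrow hσ hq hk2 hmono hlast hmark i i' hrr
          (Or.inl ⟨hgt, by omega⟩)
        simp only [if_neg h1, if_neg h2]; omega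

end main

section anal
variable (k : ℕ) (w : ℕ → ℕ)

/-- the realized orbit point. -/
def xval (q : ℕ) [NeZero q] (σ : Equiv.Perm (ZMod q)) (k : ℕ) (w : ℕ → ℕ) (i : ZMod q) : ℝ :=
  (∑ n ∈ Finset.range q, (dig q k σ w ((σ ^ n) i) : ℝ) * (k : ℝ) ^ (q - 1 - n)) /
    ((k : ℝ) ^ q - 1)

variable {k}

lemma dig_le (hk2 : 2 ≤ k) (i : ZMod q) : dig q k σ w i ≤ k - 1 := by
  unfold dig
  have := cVal_le k w (rep q i)
  split <;> omega

lemma kpow_pos (hk2 : 2 ≤ k) (n : ℕ) : (0:ℝ) < (k:ℝ) ^ n := by positivity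

lemma kq_pos (hk2 : 2 ≤ k) (hq1 : 1 ≤ q) : (0:ℝ) < (k:ℝ) ^ q - 1 := by
  have : (1:ℝ) < (k:ℝ) := by exact_mod_cast (by omega : 1 < k)
  have := one_lt_pow₀ (n := q) this (by omega)
  linarith

lemma xnum_fun (hσ : IsQCycle q σ) (hq : 2 ≤ q) (i : ZMod q) :
    (k : ℝ) * ∑ n ∈ Finset.range q, (dig q k σ w ((σ ^ n) i) : ℝ) * (k : ℝ) ^ (q - 1 - n)
      = (dig q k σ w i : ℝ) * ((k : ℝ) ^ q - 1)
        + ∑ n ∈ Finset.range q, (dig q k σ w ((σ ^ n) (σ i)) : ℝ) * (k : ℝ) ^ (q - 1 - n) := by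
  have hshift : ∀ n : ℕ, (σ ^ n) (σ i) = (σ ^ (n + 1)) i := by
    intro n
    rw [pow_succ, Equiv.Perm.mul_apply]
  have h1 : (k : ℝ) * ∑ n ∈ Finset.range q, (dig q k σ w ((σ ^ n) i) : ℝ) * (k : ℝ) ^ (q - 1 - n)
      = ∑ n ∈ Finset.range q, (dig q k σ w ((σ ^ n) i) : ℝ) * (k : ℝ) ^ (q - n) := by
    rw [Finset.mul_sum]
    apply Finset.sum_congr rfl
    intro n hn
    rw [Finset.mem_range] at hn
    have : (k:ℝ) ^ (q - n) = (k:ℝ) * (k:ℝ) ^ (q - 1 - n) := by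
      rw [← pow_succ']
      congr 1
      omega
    rw [this]; ring
  rw [h1]
  have hq1 : q = (q - 1) + 1 := by omega
  have hR : Finset.range q = Finset.range ((q-1)+1) := by rw [← hq1]
  rw [hR, Finset.sum_range_succ' (fun n => (dig q k σ w ((σ ^ n) i) : ℝ) * (k : ℝ) ^ (q - n)) (q-1),
    Finset.sum_range_succ (fun n => (dig q k σ w ((σ ^ n) (σ i)) : ℝ) * (k : ℝ) ^ (q - 1 - n)) (q-1)]
  have hlastterm : (dig q k σ w ((σ ^ (q-1)) (σ i)) : ℝ) * (k : ℝ) ^ (q - 1 - (q-1))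
      = (dig q k σ w i : ℝ) := by
    rw [hshift, Nat.sub_self, pow_zero, mul_one]
    congr 2
    rw [← hq1]
    exact pow_q hσ i
  rw [hlastterm]
  have hfirst : (dig q k σ w ((σ ^ 0) i) : ℝ) * (k : ℝ) ^ (q - 0) = (dig q k σ w i : ℝ) * (k : ℝ) ^ q := by
    norm_num
  rw [hfirst]
  have hmid : ∀ n ∈ Finset.range (q-1),
      (dig q k σ w ((σ ^ (n+1)) i) : ℝ) * (k : ℝ) ^ (q - (n+1))
        = (dig q k σ w ((σ ^ n) (σ i)) : ℝ) * (k : ℝ) ^ (q - 1 - n) := by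
    intro n hn
    rw [hshift]
    congr 2
    omega
  rw [Finset.sum_congr rfl hmid]
  ring

lemma xval_fun (hσ : IsQCycle q σ) (hq : 2 ≤ q) (hk2 : 2 ≤ k) (i : ZMod q) :
    (k : ℝ) * xval q σ k w i = (dig q k σ w i : ℝ) + xval q σ k w (σ i) := by
  have hkq := kq_pos (q := q) hk2 (by omega)
  unfold xval
  rw [mul_div_assoc']
  rw [xnum_fun w hσ hq]
  field_simp

lemma geom_aux (hk2 : 2 ≤ k) (hq : 1 ≤ q) :
    ∑ n ∈ Finset.range q, ((k:ℝ) - 1) * (k : ℝ) ^ (q - 1 - n) = (k : ℝ) ^ q - 1 := by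
  have h1 : ∑ n ∈ Finset.range q, ((k:ℝ) - 1) * (k : ℝ) ^ (q - 1 - n)
      = ∑ n ∈ Finset.range q, ((k:ℝ) - 1) * (k : ℝ) ^ n :=
    Finset.sum_range_reflect (fun n => ((k:ℝ) - 1) * (k : ℝ) ^ n) q
  have h2 : ∑ n ∈ Finset.range q, ((k:ℝ) - 1) * (k : ℝ) ^ n
      = (∑ n ∈ Finset.range q, (k : ℝ) ^ n) * ((k:ℝ) - 1) := by
    rw [Finset.sum_mul]
    exact Finset.sum_congr rfl fun n _ => mul_comm _ _
  rw [h1, h2, geom_sum_mul]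

lemma dig_nonneg (i : ZMod q) : (0:ℝ) ≤ (dig q k σ w i : ℝ) := Nat.cast_nonneg _

lemma dig_cast_le (hk2 : 2 ≤ k) (i : ZMod q) : (dig q k σ w i : ℝ) ≤ (k:ℝ) - 1 := by
  have h := dig_le (σ := σ) w hk2 i
  have : (dig q k σ w i : ℝ) ≤ ((k - 1 : ℕ) : ℝ) := Nat.cast_le.2 h
  have hc : ((k - 1 : ℕ) : ℝ) = (k:ℝ) - 1 := by
    push_cast [Nat.cast_sub (by omega : 1 ≤ k)]
    ring
  rw [hc] at this
  exact this

lemma exists_dig_pos (hσ : IsQCycle q σ) (hq : 2 ≤ q) : ∃ i0 : ZMod q, 1 ≤ dig q k σ w i0 := by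
  refine ⟨σ.symm ((1:ℕ) : ZMod q), ?_⟩
  have h1 : σ (σ.symm ((1:ℕ) : ZMod q)) = ((1:ℕ) : ZMod q) := σ.apply_symm_apply _
  have hrep1 : rep q (σ (σ.symm ((1:ℕ) : ZMod q))) = 1 := by
    rw [h1]; exact rep_cast (by omega) (by omega)
  have hne : σ.symm ((1:ℕ) : ZMod q) ≠ ((1:ℕ) : ZMod q) := by
    intro h
    have := nofix hσ hq (σ.symm ((1:ℕ) : ZMod q))
    rw [h1] at this
    exact this h.symm
  have : rep q (σ.symm ((1:ℕ) : ZMod q)) ≠ 1 := by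
    intro h
    apply hne
    apply rep_inj
    rw [h, rep_cast (by omega) (by omega)]
  have hgt : rep q (σ (σ.symm ((1:ℕ) : ZMod q))) < rep q (σ.symm ((1:ℕ) : ZMod q)) := by
    rw [hrep1]
    have := rep_pos (σ.symm ((1:ℕ) : ZMod q))
    omega
  unfold dig
  rw [if_pos hgt]
  omega

lemma exists_dig_small (hσ : IsQCycle q σ) (hq : 2 ≤ q) :
    ∃ i1 : ZMod q, dig q k σ w i1 ≤ k - 2 := by
  refine ⟨σ.symm 0, ?_⟩
  have h1 : σ (σ.symm (0 : ZMod q)) = 0 := σ.apply_symm_apply _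
  have hrepq : rep q (σ (σ.symm (0:ZMod q))) = q := by rw [h1]; unfold rep; rw [if_pos rfl]
  have hne : σ.symm (0:ZMod q) ≠ 0 := by
    intro h
    have := nofix hσ hq (σ.symm (0:ZMod q))
    rw [h1] at this
    exact this h.symm
  have hlt : ¬ (rep q (σ (σ.symm (0:ZMod q))) < rep q (σ.symm (0:ZMod q))) := by
    rw [hrepq]
    have := rep_le (σ.symm (0:ZMod q))
    omega
  unfold dig
  rw [if_neg hlt]
  exact cVal_le k w _

lemma xval_mem (hσ : IsQCycle q σ) (hq : 2 ≤ q) (hk2 : 2 ≤ k) (i : ZMod q) :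
    xval q σ k w i ∈ Set.Ioo (0:ℝ) 1 := by
  have hkq := kq_pos (q := q) hk2 (by omega)
  have hterm_nonneg : ∀ n ∈ Finset.range q,
      (0:ℝ) ≤ (dig q k σ w ((σ ^ n) i) : ℝ) * (k : ℝ) ^ (q - 1 - n) := by
    intro n _
    exact mul_nonneg (dig_nonneg w _) (le_of_lt (kpow_pos hk2 _))
  unfold xval
  constructor
  · apply div_pos _ hkq
    obtain ⟨i0, hi0⟩ := exists_dig_pos w hσ hq
    obtain ⟨n0, hn0q, hn0⟩ := orbit_lt hσ i i0
    have hle : (1:ℝ) * 1 ≤ (dig q k σ w ((σ ^ n0) i) : ℝ) * (k : ℝ) ^ (q - 1 - n0) := by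
      apply mul_le_mul
      · rw [hn0]; exact_mod_cast hi0
      · exact one_le_pow₀ (by exact_mod_cast (by omega : 1 ≤ k))
      · norm_num
      · exact dig_nonneg w _
    calc (0:ℝ) < 1 * 1 := by norm_num
    _ ≤ _ := le_trans hle (Finset.single_le_sum hterm_nonneg (Finset.mem_range.2 hn0q))
  · rw [div_lt_one hkq]
    obtain ⟨i1, hi1⟩ := exists_dig_small w hσ hq
    obtain ⟨n1, hn1q, hn1⟩ := orbit_lt hσ i i1
    have key : ∑ n ∈ Finset.range q, (dig q k σ w ((σ ^ n) i) : ℝ) * (k : ℝ) ^ (q - 1 - n) + 1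
        ≤ ∑ n ∈ Finset.range q, ((k:ℝ) - 1) * (k : ℝ) ^ (q - 1 - n) := by
      have hdiff : (1:ℝ) ≤ ∑ n ∈ Finset.range q,
          (((k:ℝ) - 1) - (dig q k σ w ((σ ^ n) i) : ℝ)) * (k : ℝ) ^ (q - 1 - n) := by
        have hnn : ∀ n ∈ Finset.range q,
            (0:ℝ) ≤ (((k:ℝ) - 1) - (dig q k σ w ((σ ^ n) i) : ℝ)) * (k : ℝ) ^ (q - 1 - n) := by
          intro n _
          apply mul_nonneg _ (le_of_lt (kpow_pos hk2 _))
          have := dig_cast_le (σ := σ) w hk2 ((σ ^ n) i)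
          linarith
        have hterm : (1:ℝ) * 1 ≤ (((k:ℝ) - 1) - (dig q k σ w ((σ ^ n1) i) : ℝ)) * (k : ℝ) ^ (q - 1 - n1) := by
          apply mul_le_mul
          · rw [hn1]
            have : (dig q k σ w i1 : ℝ) ≤ ((k - 2 : ℕ) : ℝ) := Nat.cast_le.2 hi1
            have hc : ((k - 2 : ℕ) : ℝ) = (k:ℝ) - 2 := by
              push_cast [Nat.cast_sub (by omega : 2 ≤ k)]
              ring
            rw [hc] at this
            linarith
          · exact one_le_pow₀ (by exact_mod_cast (by omega : 1 ≤ k))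
          · norm_num
          · have := dig_cast_le (σ := σ) w hk2 ((σ ^ n1) i)
            linarith
        calc (1:ℝ) = 1 * 1 := by norm_num
        _ ≤ _ := le_trans hterm (Finset.single_le_sum hnn (Finset.mem_range.2 hn1q))
      have := Finset.sum_sub_distrib (s := Finset.range q)
        (f := fun n => ((k:ℝ) - 1) * (k : ℝ) ^ (q - 1 - n))
        (g := fun n => (dig q k σ w ((σ ^ n) i) : ℝ) * (k : ℝ) ^ (q - 1 - n))
      have hre : ∑ n ∈ Finset.range q,
          (((k:ℝ) - 1) - (dig q k σ w ((σ ^ n) i) : ℝ)) * (k : ℝ) ^ (q - 1 - n)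
          = ∑ n ∈ Finset.range q, (((k:ℝ) - 1) * (k : ℝ) ^ (q - 1 - n)
            - (dig q k σ w ((σ ^ n) i) : ℝ) * (k : ℝ) ^ (q - 1 - n)) := by
        apply Finset.sum_congr rfl
        intro n _
        ring
      rw [hre, this] at hdiff
      linarith
    rw [geom_aux hk2 (by omega)] at key
    linarith


end anal

section main
variable {k : ℕ} {w : ℕ → ℕ}
variable (hσ : IsQCycle q σ) (hq : 2 ≤ q) (hk2 : 2 ≤ k)
  (hmono : ∀ m : ℕ, 1 ≤ m → m < k - 1 → w m ≤ w (m + 1))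
  (hlast : w (k - 1) = q)
  (hmark : ∀ i : ZMod q, transMatrix q σ i i = 1 →
      ∃ m : ℕ, 1 ≤ m ∧ m ≤ k - 1 ∧ w m = rep q i)
include hσ hq hk2 hmono hlast hmark in
lemma xval_mono : ∀ i i' : ZMod q, rep q i < rep q i' → xval q σ k w i < xval q σ k w i' := by
  set X := xval q σ k w with hX
  have hfun : ∀ p : ZMod q, (k : ℝ) * X p = (dig q k σ w p : ℝ) + X (σ p) :=
    fun p => xval_fun w hσ hq hk2 p
  have hmem : ∀ p : ZMod q, X p ∈ Set.Ioo (0:ℝ) 1 :=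
    fun p => xval_mem w hσ hq hk2 p
  have hk0 : (0:ℝ) < (k:ℝ) := by positivity
  have hk1 : (1:ℝ) < (k:ℝ) := by exact_mod_cast (by omega : 1 < k)
  set P : Finset (ZMod q × ZMod q) :=
    Finset.univ.filter (fun p : ZMod q × ZMod q => rep q p.1 < rep q p.2) with hP
  have hPne : P.Nonempty := by
    refine ⟨(((1:ℕ) : ZMod q), ((2:ℕ) : ZMod q)), ?_⟩
    simp only [hP, Finset.mem_filter, Finset.mem_univ, true_and]
    rw [rep_cast (by omega) (by omega), rep_cast (by omega) (by omega)]
    omega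
  obtain ⟨p0, hp0P, hp0min⟩ := P.exists_min_image (fun p => X p.2 - X p.1) hPne
  have hp0rep : rep q p0.1 < rep q p0.2 := by
    simp only [hP, Finset.mem_filter] at hp0P; exact hp0P.2
  set δ := X p0.2 - X p0.1 with hδ
  have hmin : ∀ i i' : ZMod q, rep q i < rep q i' → δ ≤ X i' - X i := by
    intro i i' h
    exact hp0min (i, i') (by simp only [hP, Finset.mem_filter, Finset.mem_univ, true_and]; exact h)
  have hδpos : 0 < δ := by
    by_contra hcon
    push_neg at hcon
    -- first: δ = 0
    have hδ0 : δ = 0 := by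
      rcases digitC hσ hq hk2 hmono hlast hmark p0.1 p0.2 hp0rep with hlt | ⟨heq, hrs⟩
      · exfalso
        have h1 := hfun p0.1
        have h2 := hfun p0.2
        have hd : (dig q k σ w p0.1 : ℝ) + 1 ≤ (dig q k σ w p0.2 : ℝ) := by exact_mod_cast hlt
        have hb1 := hmem (σ p0.1)
        have hb2 := hmem (σ p0.2)
        simp only [Set.mem_Ioo] at hb1 hb2
        have hkd : (k:ℝ) * δ = ((dig q k σ w p0.2 : ℝ) - (dig q k σ w p0.1 : ℝ))
            + (X (σ p0.2) - X (σ p0.1)) := by rw [hδ]; linarith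
        nlinarith
      · have h1 := hfun p0.1
        have h2 := hfun p0.2
        have hkd : (k:ℝ) * δ = X (σ p0.2) - X (σ p0.1) := by
          rw [hδ]
          have : (dig q k σ w p0.1 : ℝ) = (dig q k σ w p0.2 : ℝ) := by exact_mod_cast heq
          linarith
        have := hmin _ _ hrs
        nlinarith
    -- propagate equality along the orbit
    have hall : ∀ n : ℕ, rep q ((σ ^ n) p0.1) < rep q ((σ ^ n) p0.2) ∧
        X ((σ ^ n) p0.2) = X ((σ ^ n) p0.1) := by
      intro n
      induction n with
      | zero => simpa using ⟨hp0rep, by rw [hδ] at hδ0; simpa using (by linarith : X p0.2 = X p0.1)⟩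
      | succ n ih =>
        obtain ⟨hrn, hxn⟩ := ih
        have h1 := hfun ((σ ^ n) p0.1)
        have h2 := hfun ((σ ^ n) p0.2)
        have hsucc1 : (σ ^ (n+1)) p0.1 = σ ((σ ^ n) p0.1) := by
          rw [pow_succ', Equiv.Perm.mul_apply]
        have hsucc2 : (σ ^ (n+1)) p0.2 = σ ((σ ^ n) p0.2) := by
          rw [pow_succ', Equiv.Perm.mul_apply]
        have hklin : (k:ℝ) * X ((σ ^ n) p0.2) = (k:ℝ) * X ((σ ^ n) p0.1) := by rw [hxn]
        rcases digitC hσ hq hk2 hmono hlast hmark ((σ ^ n) p0.1) ((σ ^ n) p0.2) hrn with hlt | ⟨heq, hrs⟩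
        · exfalso
          have hd : (dig q k σ w ((σ ^ n) p0.1) : ℝ) + 1 ≤ (dig q k σ w ((σ ^ n) p0.2) : ℝ) := by
            exact_mod_cast hlt
          have hb1 := hmem (σ ((σ ^ n) p0.1))
          have hb2 := hmem (σ ((σ ^ n) p0.2))
          simp only [Set.mem_Ioo] at hb1 hb2
          nlinarith
        · have hdeq : (dig q k σ w ((σ ^ n) p0.1) : ℝ) = (dig q k σ w ((σ ^ n) p0.2) : ℝ) := by
            exact_mod_cast heq
          constructor
          · rw [hsucc1, hsucc2]; exact hrs
          · rw [hsucc1, hsucc2]; linarith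
    -- derive contradiction by pigeonhole along the cycle
    obtain ⟨N, hNq, hN⟩ := orbit_lt hσ p0.1 p0.2
    have hN0 : N ≠ 0 := by
      intro h
      rw [h] at hN
      simp only [pow_zero, Equiv.Perm.coe_one, id_eq] at hN
      rw [hN] at hp0rep
      omega
    have hstep : ∀ m : ℕ, rep q ((σ ^ m) p0.1) < rep q ((σ ^ (m + N)) p0.1) := by
      intro m
      have : (σ ^ (m + N)) p0.1 = (σ ^ m) p0.2 := by
        rw [pow_add, Equiv.Perm.mul_apply, hN]
      rw [this]
      exact (hall m).1
    have hchain : ∀ j : ℕ, rep q p0.1 + j ≤ rep q ((σ ^ (j * N)) p0.1) := by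
      intro j
      induction j with
      | zero => simp
      | succ j ih =>
        have h1 := hstep (j * N)
        have : (j + 1) * N = j * N + N := by ring
        rw [this]
        omega
    have := hchain q
    have h1 := rep_le ((σ ^ (q * N)) p0.1)
    have h2 := rep_pos p0.1
    omega
  intro i i' h
  have := hmin i i' h
  linarith

end main

lemma cvw {k : ℕ} {w : ℕ → ℕ} (hk2 : 2 ≤ k)
    (hmono : ∀ m : ℕ, 1 ≤ m → m < k - 1 → w m ≤ w (m + 1))
    {j r : ℕ} (hj1 : 1 ≤ j) (hj2 : j ≤ k - 2) (hr1 : 1 ≤ r) :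
    (cVal k w r < j ↔ r ≤ w j) := by
  constructor
  · intro h
    by_contra hcon
    push_neg at hcon
    have hsub : Finset.Icc 1 j ⊆ (Finset.Icc 1 (k - 2)).filter fun j' => w j' < r := by
      intro j' hj'
      rw [Finset.mem_Icc] at hj'
      rw [Finset.mem_filter, Finset.mem_Icc]
      have : w j' ≤ w j := wmono' hmono j' j hj'.1 hj'.2 (by omega)
      exact ⟨⟨hj'.1, by omega⟩, by omega⟩
    have := Finset.card_le_card hsub
    rw [Nat.card_Icc] at this
    unfold cVal at h
    omega
  · intro h
    have hsub : ((Finset.Icc 1 (k - 2)).filter fun j' => w j' < r) ⊆ Finset.Icc 1 (j - 1) := by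
      intro j' hj'
      rw [Finset.mem_filter, Finset.mem_Icc] at hj'
      rw [Finset.mem_Icc]
      refine ⟨hj'.1.1, ?_⟩
      by_contra hcon
      push_neg at hcon
      have : w j ≤ w j' := wmono' hmono j j' hj1 (by omega) (by omega)
      omega
    have := Finset.card_le_card hsub
    rw [Nat.card_Icc] at this
    unfold cVal
    omega

lemma downset (S : Finset (ZMod q))
    (hdc : ∀ p p' : ZMod q, p ∈ S → rep q p' < rep q p → p' ∈ S) (p : ZMod q) :
    p ∈ S ↔ rep q p ≤ S.card := by
  constructor
  · intro hp
    have hsub : (Finset.univ.filter fun t : ZMod q => rep q t ≤ rep q p) ⊆ S := by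
      intro t ht
      rw [Finset.mem_filter] at ht
      rcases lt_or_eq_of_le ht.2 with h | h
      · exact hdc p t hp h
      · rwa [rep_inj h]
    have := Finset.card_le_card hsub
    rw [card_rep_le (rep_le p)] at this
    exact this
  · intro hp
    by_contra hcon
    have hsub : S ⊆ Finset.univ.filter fun t : ZMod q => rep q t ≤ rep q p - 1 := by
      intro s hs
      rw [Finset.mem_filter]
      refine ⟨Finset.mem_univ s, ?_⟩
      have h1 : rep q s ≠ rep q p := fun h => hcon (by rwa [rep_inj h] at hs)
      have h2 : ¬ (rep q p < rep q s) := fun h => hcon (hdc s p hs h)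
      omega
    have := Finset.card_le_card hsub
    rw [card_rep_le (by have := rep_le p; omega)] at this
    have := rep_pos p
    omega

section main
variable {k : ℕ} {w : ℕ → ℕ}
variable (hσ : IsQCycle q σ) (hq : 2 ≤ q) (hk2 : 2 ≤ k)
  (hmono : ∀ m : ℕ, 1 ≤ m → m < k - 1 → w m ≤ w (m + 1))
  (hlast : w (k - 1) = q)
  (hmark : ∀ i : ZMod q, transMatrix q σ i i = 1 →
      ∃ m : ℕ, 1 ≤ m ∧ m ≤ k - 1 ∧ w m = rep q i)

include hσ hq hk2 hmono hlast hmark in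
lemma xval_dep : ∀ m : ℕ, 1 ≤ m → m ≤ k - 1 → depCount q k (xval q σ k w) m = w m := by
  have hkR : (0:ℝ) < (k:ℝ) - 1 := by
    have : (1:ℝ) < (k:ℝ) := by exact_mod_cast (by omega : 1 < k)
    linarith
  intro m hm1 hm2
  unfold depCount
  rcases eq_or_lt_of_le hm2 with hmk | hmk
  · -- m = k - 1 : everything is below 1
    have hall : ∀ p : ZMod q, xval q σ k w p < (m : ℝ) / ((k:ℝ) - 1) := by
      intro p
      have hmem := xval_mem w hσ hq hk2 p
      have hcast : ((m : ℕ) : ℝ) = (k:ℝ) - 1 := by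
        rw [hmk]
        push_cast [Nat.cast_sub (by omega : 1 ≤ k)]
        ring
      rw [hcast, div_self (ne_of_gt hkR)]
      exact hmem.2
    rw [Finset.filter_true_of_mem (fun p _ => hall p)]
    rw [Finset.card_univ, ZMod.card, hmk, hlast]
  · -- m ≤ k - 2
    have hmk2 : m ≤ k - 2 := by omega
    have hiff : ∀ p : ZMod q, (xval q σ k w p < (m : ℝ) / ((k:ℝ) - 1) ↔ rep q p ≤ w m) := by
      intro p
      set c := cVal k w (rep q p) with hc
      -- (k-1) * x p ∈ (c, c+1)
      have hfunp := xval_fun w hσ hq hk2 p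
      have hmemp := xval_mem w hσ hq hk2 p
      have hmemsp := xval_mem w hσ hq hk2 (σ p)
      simp only [Set.mem_Ioo] at hmemp hmemsp
      have hfix := nofix hσ hq p
      have hrne : rep q (σ p) ≠ rep q p := rep_ne_of_ne hfix
      have hz : (c:ℝ) < ((k:ℝ) - 1) * xval q σ k w p ∧
          ((k:ℝ) - 1) * xval q σ k w p < (c:ℝ) + 1 := by
        rcases lt_or_gt_of_ne hrne with hlt | hgt
        · -- descent: dig = c + 1, x (σ p) < x p
          have hdig : (dig q k σ w p : ℝ) = (c:ℝ) + 1 := by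
            unfold dig
            rw [if_pos hlt]
            push_cast
            ring
          have hxlt : xval q σ k w (σ p) < xval q σ k w p :=
            xval_mono hσ hq hk2 hmono hlast hmark (σ p) p hlt
          constructor <;> nlinarith
        · have hdig : (dig q k σ w p : ℝ) = (c:ℝ) := by
            unfold dig
            rw [if_neg (by omega)]
            push_cast
            ring
          have hxgt : xval q σ k w p < xval q σ k w (σ p) :=
            xval_mono hσ hq hk2 hmono hlast hmark p (σ p) hgt
          constructor <;> nlinarith
      have h1 : xval q σ k w p < (m : ℝ) / ((k:ℝ) - 1) ↔
          ((k:ℝ) - 1) * xval q σ k w p < (m : ℝ) := by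
        rw [lt_div_iff₀ hkR]
        constructor <;> intro h <;> nlinarith
      rw [h1]
      have h2 : ((k:ℝ) - 1) * xval q σ k w p < (m : ℝ) ↔ c < m := by
        constructor
        · intro h
          by_contra hcon
          push_neg at hcon
          have : (m:ℝ) ≤ (c:ℝ) := by exact_mod_cast hcon
          linarith [hz.1]
        · intro h
          have : (c:ℝ) + 1 ≤ (m:ℝ) := by exact_mod_cast h
          linarith [hz.2]
      rw [h2, hc]
      exact cvw hk2 hmono hm1 hmk2 (rep_pos p)
    rw [Finset.filter_congr (fun p _ => by rw [hiff p])]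
    have hwm : w m ≤ q := by
      have := wmono' hmono m (k-1) hm1 (by omega) (le_refl _)
      omega
    exact card_rep_le hwm

end main

section main
variable {k : ℕ} {w : ℕ → ℕ}
variable (hσ : IsQCycle q σ) (hq : 2 ≤ q) (hk2 : 2 ≤ k)
  (hmono : ∀ m : ℕ, 1 ≤ m → m < k - 1 → w m ≤ w (m + 1))
  (hlast : w (k - 1) = q)


include hσ hq hk2 hmono hlast in
/-- digit identification for an arbitrary realization with the given deployment data. -/
lemma realization_digit (y : ZMod q → ℝ)
    (hb : ∀ i, y i ∈ Set.Ioo (0:ℝ) 1)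
    (hym : ∀ i j : ZMod q, rep q i < rep q j → y i < y j)
    (hyf : ∀ i, ∃ m : ℤ, (k:ℝ) * y i = y (σ i) + (m:ℝ))
    (hdep : ∀ m : ℕ, 1 ≤ m → m ≤ k - 1 → depCount q k y m = w m) :
    ∀ p, (k:ℝ) * y p = (dig q k σ w p : ℝ) + y (σ p) := by
  have hkR : (0:ℝ) < (k:ℝ) - 1 := by
    have : (1:ℝ) < (k:ℝ) := by exact_mod_cast (by omega : 1 < k)
    linarith
  -- y never hits an integer multiple
  have hyne : ∀ p : ZMod q, ∀ z : ℤ, ((k:ℝ) - 1) * y p ≠ (z:ℝ) := by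
    intro p z hzeq
    obtain ⟨m, hm⟩ := hyf p
    have hfix := nofix hσ hq p
    have hrne : rep q (σ p) ≠ rep q p := rep_ne_of_ne hfix
    have hyne' : y (σ p) ≠ y p := by
      rcases lt_or_gt_of_ne hrne with h | h
      · exact ne_of_lt (hym _ _ h)
      · exact ne_of_gt (hym _ _ h)
    have hb1 := hb p
    have hb2 := hb (σ p)
    simp only [Set.mem_Ioo] at hb1 hb2
    have hdiff : y (σ p) - y p = ((z - m : ℤ) : ℝ) := by
      push_cast
      linarith
    have h1 : (-1 : ℝ) < ((z - m : ℤ) : ℝ) := by rw [← hdiff]; linarith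
    have h2 : ((z - m : ℤ) : ℝ) < 1 := by rw [← hdiff]; linarith
    have h3 : ((z - m : ℤ) : ℝ) ≠ 0 := by
      rw [← hdiff]
      intro h
      exact hyne' (by linarith)
    have hz1 : (-1 : ℤ) < z - m := by exact_mod_cast h1
    have hz2 : (z - m : ℤ) < 1 := by exact_mod_cast h2
    have hz3 : (z - m : ℤ) ≠ 0 := by
      intro h
      apply h3
      rw [h]
      simp
    omega
  -- position of y p relative to the fixed points
  have hpos : ∀ p : ZMod q, ∀ j : ℕ, 1 ≤ j → j ≤ k - 2 →
      ((j:ℝ) < ((k:ℝ) - 1) * y p ↔ w j < rep q p) := by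
    intro p j hj1 hj2
    have hdepj := hdep j hj1 (by omega)
    -- the set of points below j/(k-1) is a down-set of cardinality w j
    set S := Finset.univ.filter fun t : ZMod q => y t < (j : ℝ) / ((k:ℝ) - 1) with hS
    have hcard : S.card = w j := hdepj
    have hdc : ∀ a a' : ZMod q, a ∈ S → rep q a' < rep q a → a' ∈ S := by
      intro a a' ha hlt
      simp only [hS, Finset.mem_filter, Finset.mem_univ, true_and] at ha ⊢
      exact lt_trans (hym _ _ hlt) ha
    have hmem := downset S hdc p
    rw [hcard] at hmem
    simp only [hS, Finset.mem_filter, Finset.mem_univ, true_and] at hmem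
    have hne : y p ≠ (j:ℝ) / ((k:ℝ) - 1) := by
      intro h
      apply hyne p (j : ℤ)
      rw [h]
      field_simp
      norm_cast
    constructor
    · intro h
      by_contra hcon
      push_neg at hcon
      have : y p < (j:ℝ) / ((k:ℝ) - 1) := hmem.2 hcon
      rw [lt_div_iff₀ hkR] at this
      nlinarith
    · intro h
      have hnlt : ¬ (y p < (j:ℝ) / ((k:ℝ) - 1)) := fun hc => by
        have := hmem.1 hc
        omega
      push_neg at hnlt
      rcases lt_or_eq_of_le hnlt with hlt | heq
      · rw [div_lt_iff₀ hkR] at hlt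
        nlinarith
      · exact absurd heq.symm hne
  -- now identify the digit
  intro p
  obtain ⟨m, hm⟩ := hyf p
  set z := ((k:ℝ) - 1) * y p with hzdef
  set c := cVal k w (rep q p) with hc
  have hb1 := hb p
  have hb2 := hb (σ p)
  simp only [Set.mem_Ioo] at hb1 hb2
  have hz_pos : 0 < z := by rw [hzdef]; exact mul_pos hkR hb1.1
  have hz_lt : z < (k:ℝ) - 1 := by rw [hzdef]; nlinarith
  -- c = Nat.floor z and bounds
  have hfloor_le : (⌊z⌋₊ : ℝ) ≤ z := Nat.floor_le (le_of_lt hz_pos)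
  have hfloor_lt : z < (⌊z⌋₊ : ℝ) + 1 := Nat.lt_floor_add_one z
  have hfloor_k : ⌊z⌋₊ ≤ k - 2 := by
    have : z < ((k - 1 : ℕ) : ℝ) := by
      rwa [show ((k - 1 : ℕ) : ℝ) = (k:ℝ) - 1 by push_cast [Nat.cast_sub (by omega : 1 ≤ k)]; ring]
    have := Nat.floor_lt (le_of_lt hz_pos) |>.2 this
    omega
  have hceq : c = ⌊z⌋₊ := by
    rw [hc]
    unfold cVal
    have hset : ((Finset.Icc 1 (k - 2)).filter fun j => w j < rep q p)
        = Finset.Icc 1 ⌊z⌋₊ := by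
      ext j
      simp only [Finset.mem_filter, Finset.mem_Icc]
      constructor
      · rintro ⟨⟨hj1, hj2⟩, hjw⟩
        refine ⟨hj1, ?_⟩
        have := (hpos p j hj1 hj2).2 hjw
        exact Nat.le_floor (le_of_lt this)
      · rintro ⟨hj1, hj2⟩
        have hjk : j ≤ k - 2 := le_trans hj2 hfloor_k
        refine ⟨⟨hj1, hjk⟩, ?_⟩
        apply (hpos p j hj1 hjk).1
        have hjle : (j : ℝ) ≤ z := le_trans (by exact_mod_cast hj2) hfloor_le
        rcases lt_or_eq_of_le hjle with h | h
        · exact h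
        · exact absurd h.symm (hyne p (j:ℤ))
    rw [hset, Nat.card_Icc]
    omega
  have hcz1 : (c:ℝ) < z := by
    rw [hceq]
    rcases lt_or_eq_of_le hfloor_le with h | h
    · exact h
    · exfalso
      exact hyne p (⌊z⌋₊ : ℤ) (by rw [← hzdef]; exact_mod_cast h.symm)
  have hcz2 : z < (c:ℝ) + 1 := by rw [hceq]; exact hfloor_lt
  -- identify m
  have hfix := nofix hσ hq p
  have hrne : rep q (σ p) ≠ rep q p := rep_ne_of_ne hfix
  have hmz : (m:ℝ) = z + (y p - y (σ p)) := by
    rw [hzdef]; linarith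
  rcases lt_or_gt_of_ne hrne with hlt | hgt
  · -- descent : m = c + 1
    have hylt : y (σ p) < y p := hym _ _ hlt
    have hm1 : (c:ℝ) < (m:ℝ) := by rw [hmz]; nlinarith
    have hm2 : (m:ℝ) < (c:ℝ) + 2 := by rw [hmz]; nlinarith
    have hmc : m = (c:ℤ) + 1 := by
      have h1 : (c:ℤ) < m := by exact_mod_cast hm1
      have h2 : m < (c:ℤ) + 2 := by exact_mod_cast hm2
      omega
    have hdig : (dig q k σ w p : ℝ) = (c:ℝ) + 1 := by
      unfold dig
      rw [← hc, if_pos hlt]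
      push_cast
      ring
    rw [hm] at *
    rw [hdig]
    have : (m:ℝ) = (c:ℝ) + 1 := by exact_mod_cast hmc
    linarith [hm]
  · -- ascent : m = c
    have hygt : y p < y (σ p) := hym _ _ hgt
    have hm1 : (c:ℝ) - 1 < (m:ℝ) := by rw [hmz]; nlinarith
    have hm2 : (m:ℝ) < (c:ℝ) + 1 := by rw [hmz]; nlinarith
    have hmc : m = (c:ℤ) := by
      have h1 : (c:ℤ) - 1 < m := by exact_mod_cast hm1
      have h2 : m < (c:ℤ) + 1 := by exact_mod_cast hm2
      omega
    have hdig : (dig q k σ w p : ℝ) = (c:ℝ) := by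
      unfold dig
      rw [← hc, if_neg (by omega)]
      push_cast
      ring
    rw [hdig]
    have : (m:ℝ) = (c:ℝ) := by exact_mod_cast hmc
    linarith [hm]

/-- two solutions of the digit equation coincide. -/
lemma eq_of_fun (hk2 : 2 ≤ k) (x y : ZMod q → ℝ)
    (hx : ∀ p, (k:ℝ) * x p = (dig q k σ w p : ℝ) + x (σ p))
    (hy : ∀ p, (k:ℝ) * y p = (dig q k σ w p : ℝ) + y (σ p)) : x = y := by
  obtain ⟨p0, _, hmax⟩ := Finset.exists_max_image Finset.univ (fun p : ZMod q => |x p - y p|)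
    ⟨0, Finset.mem_univ 0⟩
  set M := |x p0 - y p0| with hM
  have hM0 : 0 ≤ M := abs_nonneg _
  have hstep : |x (σ p0) - y (σ p0)| = (k:ℝ) * M := by
    have h1 := hx p0
    have h2 := hy p0
    have : x (σ p0) - y (σ p0) = (k:ℝ) * (x p0 - y p0) := by linarith
    rw [this, abs_mul, abs_of_nonneg (by positivity : (0:ℝ) ≤ (k:ℝ))]
  have hle := hmax (σ p0) (Finset.mem_univ _)
  rw [hstep] at hle
  have hk1 : (1:ℝ) < (k:ℝ) := by exact_mod_cast (by omega : 1 < k)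
  have hM00 : M = 0 := by nlinarith
  funext p
  have := hmax p (Finset.mem_univ _)
  rw [hM00] at this
  have := abs_nonneg (x p - y p)
  have h0 : |x p - y p| = 0 := le_antisymm (by linarith) this
  have := abs_eq_zero.1 h0
  linarith

end main
end RealAux

/-- The Realization Theorem: let `σ` be a `q`-cycle with `des σ = d` and let
`k ≥ max {d, 2}`. For every `σ`-admissible deployment vector
`w = (w₁, …, w_{k-1})` (non-decreasing, `w_{k-1} = q`, and every marked index
`i₁, …, i_{d-1}` of the signature appears among the components) there is a
unique realization `𝒪` of `σ` under `m_k` with `dep 𝒪 = w`. -/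
theorem realization_from_deployment_vector (q d k : ℕ) [NeZero q] (hq : 2 ≤ q)
    (σ : Equiv.Perm (ZMod q)) (hσ : IsQCycle q σ) (hd : desNum q σ = d)
    (hk2 : 2 ≤ k) (hkd : d ≤ k)
    (w : ℕ → ℕ)
    (hmono : ∀ m : ℕ, 1 ≤ m → m < k - 1 → w m ≤ w (m + 1))
    (hlast : w (k - 1) = q)
    (hmark : ∀ i : ZMod q, transMatrix q σ i i = 1 →
      ∃ m : ℕ, 1 ≤ m ∧ m ≤ k - 1 ∧ w m = rep q i) :
    ∃! x : ZMod q → ℝ, MkRealization q k σ x ∧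
      ∀ m : ℕ, 1 ≤ m → m ≤ k - 1 → depCount q k x m = w m := by
  classical
  refine ⟨RealAux.xval q σ k w, ⟨?_, ?_⟩, ?_⟩
  · -- it is a realization
    refine ⟨fun i => RealAux.xval_mem w hσ hq hk2 i,
      fun i j h => RealAux.xval_mono hσ hq hk2 hmono hlast hmark i j h, ?_⟩
    intro i
    refine ⟨(RealAux.dig q k σ w i : ℤ), ?_⟩
    have h := RealAux.xval_fun w hσ hq hk2 i
    push_cast
    linarith
  · -- deployment vector
    exact RealAux.xval_dep hσ hq hk2 hmono hlast hmark
  · -- uniqueness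
    intro y hy
    obtain ⟨hreal, hdep⟩ := hy
    unfold MkRealization IsRealization at hreal
    obtain ⟨hb, hym, hyf⟩ := hreal
    have hyf' : ∀ i, ∃ m : ℤ, (k:ℝ) * y i = y (σ i) + (m:ℝ) := by
      intro i
      obtain ⟨m, hm⟩ := hyf i
      exact ⟨m, by simpa using hm⟩
    have hdigy := RealAux.realization_digit hσ hq hk2 hmono hlast y hb hym hyf' hdep
    have hdigx : ∀ p, (k:ℝ) * RealAux.xval q σ k w p
        = (RealAux.dig q k σ w p : ℝ) + RealAux.xval q σ k w (σ p) :=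
      fun p => RealAux.xval_fun w hσ hq hk2 p
    exact RealAux.eq_of_fun hk2 y (RealAux.xval q σ k w) hdigy hdigx
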